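/- Let a, b be real numbers, set v := (a + b·i)·e₁ + e₆ in ℂ⁆ (e₁,…,e₆ the standard basis of ℂ⁶, i the imaginary unit), and let S := N_x + N_y. Extend Q ℂ-bilinearly, i.e., Q(x,y) := xᵀ·Q·y for x, y ∈ ℂ⁶, and let conj denote componentwise complex conjugation. Then for every real number h: (−i)·Q(exp(i·h·S)·v, conj(exp(i·h·S)·v)) = (280·h³ − 6·b)/3, where exp denotes the matrix exponential. -/

import Mathlib

open Matrix NormedSpace

/-- The symplectic form `Q` of the (1,2,2,1) family (eq. (5.3)), as a complex matrix. -/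
def QC : Matrix (Fin 6) (Fin 6) ℂ :=
  !![0, 0, 0, 0, 0, -1;
     0, 0, 0, 0, -1, 0;
     0, 0, 0, -1, 0, 0;
     0, 0, 1, 0, 0, 0;
     0, 1, 0, 0, 0, 0;
     1, 0, 0, 0, 0, 0]

/-- The ℂ-bilinear extension of `Q`: `Q(x,y) = xᵀ·Q·y`. -/
noncomputable def Qbil (x y : Fin 6 → ℂ) : ℂ := x ⬝ᵥ (QC *ᵥ y)

/-- The monodromy logarithm `N_x` (modulo weight-filtration level, eq. (6.6)). -/
def NxC : Matrix (Fin 6) (Fin 6) ℂ :=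
  !![0, -1, 0, 0, 0, 0;
     0, 0, 0, -10, -5, 0;
     0, 0, 0, -10, -10, 0;
     0, 0, 0, 0, 0, 0;
     0, 0, 0, 0, 0, 1;
     0, 0, 0, 0, 0, 0]

/-- The monodromy logarithm `N_y` (modulo weight-filtration level, eq. (6.6)). -/
def NyC : Matrix (Fin 6) (Fin 6) ℂ :=
  !![0, 0, -1, 0, 0, 0;
     0, 0, 0, -10, -10, 0;
     0, 0, 0, -5, -10, 0;
     0, 0, 0, 0, 0, 1;
     0, 0, 0, 0, 0, 0;
     0, 0, 0, 0, 0, 0]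

set_option maxHeartbeats 1000000

def SC : Matrix (Fin 6) (Fin 6) ℂ :=
  !![0, -1, -1, 0, 0, 0;
     0, 0, 0, -20, -15, 0;
     0, 0, 0, -15, -20, 0;
     0, 0, 0, 0, 0, 1;
     0, 0, 0, 0, 0, 1;
     0, 0, 0, 0, 0, 0]

def SC2 : Matrix (Fin 6) (Fin 6) ℂ :=
  !![0,0,0,35,35,0; 0,0,0,0,0,-35; 0,0,0,0,0,-35; 0,0,0,0,0,0; 0,0,0,0,0,0; 0,0,0,0,0,0]

def SC3 : Matrix (Fin 6) (Fin 6) ℂ :=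
  !![0,0,0,0,0,70; 0,0,0,0,0,0; 0,0,0,0,0,0; 0,0,0,0,0,0; 0,0,0,0,0,0; 0,0,0,0,0,0]

lemma cons_val_five {α : Type*} {m : ℕ} (x : α) (u : Fin (m+5) → α) :
    Matrix.vecCons x u 5 = Matrix.vecHead (Matrix.vecTail (Matrix.vecTail (Matrix.vecTail (Matrix.vecTail u)))) := rfl

lemma hS : NxC + NyC = SC := by
  ext i j; fin_cases i <;> fin_cases j <;> norm_num [NxC, NyC, SC]

lemma hS2 : SC ^ 2 = SC2 := by
  rw [pow_two]
  ext i j; fin_cases i <;> fin_cases j <;>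
    norm_num [SC, SC2, Matrix.mul_apply, Fin.sum_univ_succ]

lemma hS3 : SC ^ 3 = SC3 := by
  rw [pow_succ, hS2]
  ext i j; fin_cases i <;> fin_cases j <;>
    norm_num [SC, SC2, SC3, Matrix.mul_apply, Fin.sum_univ_succ]

lemma hS4 : SC ^ 4 = 0 := by
  rw [pow_succ, hS3]
  ext i j; fin_cases i <;> fin_cases j <;>
    norm_num [SC, SC3, Matrix.mul_apply, Fin.sum_univ_succ]

lemma exp_nilp (M : Matrix (Fin 6) (Fin 6) ℂ) (h4 : M ^ 4 = 0) :
    exp M = 1 + M + (2 : ℂ)⁻¹ • M ^ 2 + (6 : ℂ)⁻¹ • M ^ 3 := by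
  rw [exp_eq_tsum ℂ]
  dsimp only
  rw [tsum_eq_sum (s := Finset.range 4) (fun n hn => by
    have h4le : 4 ≤ n := by simpa using hn
    obtain ⟨k, rfl⟩ := Nat.exists_eq_add_of_le h4le
    rw [pow_add, h4, zero_mul, smul_zero])]
  simp [Finset.sum_range_succ, Nat.factorial]

theorem stmt_14 (a b : ℝ) (h : ℝ) (v : Fin 6 → ℂ)
    (hv : v = ![(a : ℂ) + (b : ℂ) * Complex.I, 0, 0, 0, 0, 1]) :
    (-Complex.I) *
        Qbil (exp ((Complex.I * (h : ℂ)) • (NxC + NyC)) *ᵥ v)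
          (star (exp ((Complex.I * (h : ℂ)) • (NxC + NyC)) *ᵥ v))
      = (280 * (h : ℂ) ^ 3 - 6 * (b : ℂ)) / 3 := by
  set c : ℂ := Complex.I * (h : ℂ) with hc
  have hM4 : ((c • SC) : Matrix (Fin 6) (Fin 6) ℂ) ^ 4 = 0 := by
    rw [smul_pow, hS4, smul_zero]
  have hexp : exp (c • SC) =
      1 + c • SC + (2 : ℂ)⁻¹ • (c ^ 2 • SC2) + (6 : ℂ)⁻¹ • (c ^ 3 • SC3) := by
    rw [exp_nilp _ hM4, smul_pow, smul_pow, hS2, hS3]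
  set z : ℂ := (a : ℂ) + (b : ℂ) * Complex.I with hz
  have hw : exp (c • SC) *ᵥ v =
      ![z + 35 / 3 * c ^ 3, -(35 / 2) * c ^ 2, -(35 / 2) * c ^ 2, c, c, 1] := by
    rw [hexp, hv]
    simp only [Matrix.add_mulVec, Matrix.smul_mulVec, Matrix.one_mulVec, SC, SC2, SC3,
      Matrix.cons_mulVec, Matrix.cons_dotProduct, Matrix.dotProduct_of_isEmpty, Matrix.empty_mulVec,
      Matrix.head_cons, Matrix.tail_cons]
    ext i
    fin_cases i <;>
      simp [Matrix.cons_val_zero, Matrix.cons_val_one, Matrix.cons_val_two, Matrix.cons_val_three,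
        Matrix.cons_val_four, cons_val_five, Matrix.vecHead, Matrix.vecTail] <;> ring
  have hcc : starRingEnd ℂ c = -c := by
    rw [hc, _root_.map_mul, Complex.conj_I, Complex.conj_ofReal]; ring
  have hzz : starRingEnd ℂ z = (a : ℂ) - (b : ℂ) * Complex.I := by
    rw [hz, map_add, _root_.map_mul, Complex.conj_I, Complex.conj_ofReal, Complex.conj_ofReal]; ring
  have hstar : star (![z + 35 / 3 * c ^ 3, -(35 / 2) * c ^ 2, -(35 / 2) * c ^ 2, c, c, 1] :
      Fin 6 → ℂ) = ![(a : ℂ) - (b : ℂ) * Complex.I - 35 / 3 * c ^ 3, -(35 / 2) * c ^ 2,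
        -(35 / 2) * c ^ 2, -c, -c, 1] := by
    ext i
    fin_cases i <;>
      simp [Matrix.cons_val_zero, Matrix.cons_val_one, Matrix.cons_val_two, Matrix.cons_val_three,
        Matrix.cons_val_four, cons_val_five, Matrix.vecHead, Matrix.vecTail,
        Complex.star_def, map_add, _root_.map_mul, map_pow, map_div₀, map_ofNat, map_neg, map_sub,
        hcc, hzz] <;> ring
  rw [hS, hw, hstar]
  simp only [Qbil, QC, Matrix.cons_mulVec, Matrix.cons_dotProduct, Matrix.dotProduct_of_isEmpty,
    Matrix.empty_mulVec, Matrix.head_cons, Matrix.tail_cons, Matrix.cons_val_zero,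
    Matrix.cons_val_one]
  rw [hz, hc]
  ring_nf
  simp [Complex.I_sq]
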